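/- Let d ≥ 1, η ≥ 0, 0 < β < 1, and let r : ℝ^d × ℝ^d → ℝ be differentiable in its second argument with ‖∇_a r(x, a)‖ ≤ η/‖x − a‖ for all x ≠ a. Let ctr ∈ ℝ^d, rad > 0, and let x ∈ ℝ^d satisfy ‖x − ctr‖ ≥ rad/β. Then for any two points a₁, a₂ in the closed ball of radius rad centered at ctr, |r(x, a₁) − r(x, a₂)| ≤ 2·η·β/(1 − β). -/

import Mathlib

/-- Consistency of rewards within a far-away node of the arm hierarchy: if the reward
`r(x, ·)` is differentiable with `‖∇_a r(x,a)‖ ≤ η/‖x - a‖`, and `x` is at distance at least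
`rad/β` from the center of a ball of radius `rad`, then the rewards of any two arms in the
ball differ by at most `2ηβ/(1-β)`. -/
theorem reward_consistency_far_node (d : ℕ) (hd : 1 ≤ d) (η : ℝ) (hη : 0 ≤ η)
    (β : ℝ) (hβ0 : 0 < β) (hβ1 : β < 1)
    (r : EuclideanSpace ℝ (Fin d) → EuclideanSpace ℝ (Fin d) → ℝ)
    (hdiff : ∀ x, Differentiable ℝ (r x))
    (hgrad : ∀ x a, x ≠ a → ‖gradient (r x) a‖ ≤ η / ‖x - a‖)
    (ctr : EuclideanSpace ℝ (Fin d)) (rad : ℝ) (hrad : 0 < rad)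
    (x : EuclideanSpace ℝ (Fin d)) (hx : rad / β ≤ ‖x - ctr‖)
    (a₁ a₂ : EuclideanSpace ℝ (Fin d))
    (ha₁ : a₁ ∈ Metric.closedBall ctr rad) (ha₂ : a₂ ∈ Metric.closedBall ctr rad) :
    |r x a₁ - r x a₂| ≤ 2 * η * β / (1 - β) := by
  have h1β : 0 < 1 - β := by linarith
  set C : ℝ := η * β / (rad * (1 - β)) with hC
  have hden : 0 < rad * (1 - β) / β := by positivity
  -- lower bound on ‖x - a‖ for a in the ball
  have hfar : ∀ a ∈ Metric.closedBall ctr rad, rad * (1 - β) / β ≤ ‖x - a‖ := by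
    intro a ha
    rw [Metric.mem_closedBall, dist_eq_norm] at ha
    have h1 : ‖x - ctr‖ ≤ ‖x - a‖ + ‖a - ctr‖ := by
      simpa using norm_sub_le_norm_sub_add_norm_sub x a ctr
    have h2 : rad / β ≤ ‖x - a‖ + rad := by linarith
    have h3 : rad / β - rad ≤ ‖x - a‖ := by linarith
    have heq : rad * (1 - β) / β = rad / β - rad := by
      field_simp
    linarith [heq ▸ h3]
  have hbound : ∀ a ∈ Metric.closedBall ctr rad, ‖fderiv ℝ (r x) a‖ ≤ C := by
    intro a ha
    have hne : x ≠ a := by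
      intro h
      have := hfar a ha
      rw [h, sub_self, norm_zero] at this
      linarith
    have hgr := hgrad x a hne
    have hnorm : ‖fderiv ℝ (r x) a‖ = ‖gradient (r x) a‖ := by
      rw [gradient, LinearIsometryEquiv.norm_map]
    rw [hnorm]
    refine hgr.trans ?_
    have hxa : 0 < ‖x - a‖ := lt_of_lt_of_le hden (hfar a ha)
    rw [hC, div_le_div_iff₀ hxa (by positivity)]
    have h2 : rad * (1 - β) / β ≤ ‖x - a‖ := hfar a ha
    calc η * (rad * (1 - β)) = η * β * (rad * (1 - β) / β) := by
          field_simp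
      _ ≤ η * β * ‖x - a‖ := mul_le_mul_of_nonneg_left h2 (by positivity)
  have key := (convex_closedBall ctr rad).norm_image_sub_le_of_norm_fderiv_le
    (fun a _ => (hdiff x a)) hbound ha₂ ha₁
  have hdist : ‖a₁ - a₂‖ ≤ 2 * rad := by
    rw [Metric.mem_closedBall] at ha₁ ha₂
    rw [← dist_eq_norm]
    calc dist a₁ a₂ ≤ dist a₁ ctr + dist ctr a₂ := dist_triangle _ _ _
      _ ≤ rad + rad := add_le_add ha₁ (by rwa [dist_comm])
      _ = 2 * rad := by ring
  have hCnn : 0 ≤ C := by positivity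
  rw [Real.norm_eq_abs] at key
  calc |r x a₁ - r x a₂| ≤ C * ‖a₁ - a₂‖ := key
    _ ≤ C * (2 * rad) := mul_le_mul_of_nonneg_left hdist hCnn
    _ = 2 * η * β / (1 - β) := by
      rw [hC, div_mul_eq_mul_div, div_eq_div_iff (mul_pos hrad h1β).ne' h1β.ne']; ring
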